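/- In the group G_n = ⟨x₁, …, x_n | x_{i+1} x_i x_{i+1}⁻¹ = x_i² for 1 ≤ i ≤ n−1⟩, the element v_n = [g_n, x₁] is trivial, where g_n is the iterated conjugation element defined by y_n = x_n^n and y_i = y_{i+1} x_i y_{i+1}⁻¹ for i < n, with g_n = y₁. -/

import Mathlib

/-- Tower of exponentials: `tower 0 k = k`, `tower (n+1) k = 2 ^ tower n k`. -/
def tower : ℕ → ℕ → ℕ
  | 0, k => k
  | n + 1, k => 2 ^ tower n k

/-- The `i`-th generator (0-indexed) of the free group on `n` generators,
or `1` if `i` is out of range. -/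
def fgen (n i : ℕ) : FreeGroup (Fin n) :=
  if h : i < n then FreeGroup.of ⟨i, h⟩ else 1

/-- The relators of G_n = ⟨x₁, …, x_n | x_{i+1} x_i x_{i+1}⁻¹ = x_i², 1 ≤ i ≤ n−1⟩,
with x_{j+1} corresponding to the 0-indexed generator `fgen n j`. -/
def Grel (n : ℕ) : Set (FreeGroup (Fin n)) :=
  {w | ∃ i : ℕ, i + 1 < n ∧
    w = fgen n (i + 1) * fgen n i * (fgen n (i + 1))⁻¹ * (fgen n i ^ 2)⁻¹}

/-- The group G_n. -/
abbrev Gm (n : ℕ) := PresentedGroup (Grel n)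

/-- The 0-indexed generators of G_n (trivial when out of range). -/
def xg (n i : ℕ) : Gm n :=
  if h : i < n then PresentedGroup.of ⟨i, h⟩ else 1

/-- The downward recursive sequence: `zseq x n k 0 = x_{n-1}^k` (the top element `y_n`)
and `zseq x n k (j+1) = zseq x n k j * x (n-2-j) * (zseq x n k j)⁻¹`
(so `zseq x n k j = y_{n-1-j}` where `y_i = y_{i+1} x_i y_{i+1}⁻¹`). -/
def zseq {G : Type} [Group G] (x : ℕ → G) (n k : ℕ) : ℕ → G
  | 0 => x (n - 1) ^ k
  | j + 1 => zseq x n k j * x (n - 2 - j) * (zseq x n k j)⁻¹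

/-- g_k = y₁, the iterated conjugation x₁^{x₂^{⋯^{x_n^k}}}. -/
def gElt {G : Type} [Group G] (x : ℕ → G) (n k : ℕ) : G := zseq x n k (n - 1)

open scoped commutatorElement


lemma mk_fgen (n j : ℕ) : (QuotientGroup.mk (fgen n j) : Gm n) = xg n j := by
  unfold fgen xg
  split <;> rfl

lemma xg_rel (n i : ℕ) (h : i + 1 < n) :
    xg n (i + 1) * xg n i * (xg n (i + 1))⁻¹ = xg n i ^ 2 := by
  have h1 : (QuotientGroup.mk (fgen n (i + 1) * fgen n i * (fgen n (i + 1))⁻¹ *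
      (fgen n i ^ 2)⁻¹) : Gm n) = 1 := by
    apply (QuotientGroup.eq_one_iff _).mpr
    exact Subgroup.subset_normalClosure ⟨i, h, rfl⟩
  have h2 := h1
  rw [QuotientGroup.mk_mul, QuotientGroup.mk_mul, QuotientGroup.mk_mul,
    QuotientGroup.mk_inv, QuotientGroup.mk_inv, QuotientGroup.mk_pow,
    mk_fgen, mk_fgen] at h2
  rw [mul_inv_eq_one] at h2
  exact h2

lemma xg_conj_pow (n i : ℕ) (h : i + 1 < n) (m : ℕ) :
    xg n (i + 1) ^ m * xg n i * (xg n (i + 1) ^ m)⁻¹ = xg n i ^ 2 ^ m := by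
  induction m with
  | zero => simp
  | succ m ih =>
    have : xg n (i+1) ^ (m+1) * xg n i * (xg n (i+1) ^ (m+1))⁻¹
        = xg n (i+1) * (xg n (i+1) ^ m * xg n i * (xg n (i+1) ^ m)⁻¹) * (xg n (i+1))⁻¹ := by
      rw [pow_succ']; group
    rw [this, ih, ← conj_pow, xg_rel n i h, ← pow_mul, pow_succ]
    ring_nf

lemma zseq_eq (n k : ℕ) (hn : 1 ≤ n) :
    ∀ j, j ≤ n - 1 → zseq (xg n) n k j = xg n (n - 1 - j) ^ tower j k := by
  intro j
  induction j with
  | zero => intro _; simp [zseq, tower]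
  | succ j ih =>
    intro hj
    have hj' : j ≤ n - 1 := by omega
    have h1 : (n - 2 - j) + 1 = n - 1 - j := by omega
    have h2 : (n - 2 - j) + 1 < n := by omega
    have h3 : n - 1 - (j + 1) = n - 2 - j := by omega
    rw [zseq, ih hj', h3]
    have := xg_conj_pow n (n - 2 - j) h2 (tower j k)
    rw [h1] at this
    rw [this]
    rfl

/-- In G_n, the element v_n = [g_n, x₁] is trivial, where g_n is the iterated
conjugation element with k = n. -/
theorem stmt3 (n : ℕ) (hn : 1 ≤ n) :
    ⁅gElt (xg n) n n, xg n 0⁆ = (1 : Gm n) := by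
  have hg : gElt (xg n) n n = xg n 0 ^ tower (n - 1) n := by
    have := zseq_eq n n hn (n - 1) le_rfl
    rwa [Nat.sub_self] at this
  rw [hg, commutatorElement_def]
  group
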